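/- Let X and W be real random variables with E X = E W = 0, E|X|^{2+θ} ≤ M and E|W|^{2+θ} ≤ M for some 0 < θ ≤ 1 and M > 0, and let κ > 0. Then |Cov(t_κ(X), t_κ(W)) − Cov(X, W)| ≤ 2 κ^{−θ} M + κ^{−2(1+θ)} M². -/

import Mathlib

open MeasureTheory

/-- The truncation function `t_κ(x) = (x ∧ κ) ∨ (-κ)`. -/
noncomputable def tk (κ x : ℝ) : ℝ := max (min x κ) (-κ)

/-- The covariance `Cov(U, V) = E[UV] - E[U] E[V]` of two real random variables. -/
noncomputable def cov {Ω : Type*} [MeasurableSpace Ω] (P : Measure Ω) (U V : Ω → ℝ) : ℝ :=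
  (∫ ω, U ω * V ω ∂P) - (∫ ω, U ω ∂P) * ∫ ω, V ω ∂P

lemma abs_tk_le {κ : ℝ} (hκ : 0 ≤ κ) (x : ℝ) : |tk κ x| ≤ κ := by
  unfold tk
  rw [abs_le]
  constructor
  · exact le_max_right _ _
  · exact max_le (min_le_right _ _) (by linarith)

lemma tk_eq_self {κ x : ℝ} (hx : |x| ≤ κ) : tk κ x = x := by
  rw [abs_le] at hx
  unfold tk
  rw [min_eq_left hx.2, max_eq_left hx.1]

lemma abs_tk_sub_le {κ : ℝ} (hκ : 0 ≤ κ) (x : ℝ) : |tk κ x - x| ≤ |x| := by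
  unfold tk
  rcases le_total x (-κ) with h | h
  · rw [min_eq_left (show x ≤ κ by linarith), max_eq_right h]
    rw [abs_of_nonneg (by linarith), abs_of_nonpos (by linarith)]
    linarith
  · rcases le_total x κ with h2 | h2
    · rw [min_eq_left h2, max_eq_left h]
      simpa using abs_nonneg x
    · rw [min_eq_right h2, max_eq_left (by linarith)]
      rw [abs_of_nonpos (by linarith), abs_of_nonneg (by linarith)]
      linarith

lemma trade' {κ θ s t x : ℝ} (hκ : 0 < κ) (hs : 0 ≤ s) (hst : s + t = 2 + θ)
    (hx : κ ≤ |x|) : κ ^ s * |x| ^ t ≤ |x| ^ (2 + θ) := by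
  have hx0 : 0 < |x| := lt_of_lt_of_le hκ hx
  rw [← hst, Real.rpow_add hx0]
  exact mul_le_mul_of_nonneg_right (Real.rpow_le_rpow hκ.le hx hs)
    (Real.rpow_nonneg hx0.le _)

lemma abs_le_trade {κ θ x : ℝ} (hκ : 0 < κ) (hθ : 0 < θ) (hx : κ ≤ |x|) :
    |x| ≤ κ ^ (-(1 + θ)) * |x| ^ (2 + θ) := by
  rw [Real.rpow_neg hκ.le, le_inv_mul_iff₀ (Real.rpow_pos_of_pos hκ _)]
  have := trade' (θ := θ) (s := 1 + θ) (t := 1) hκ (by linarith) (by ring) hx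
  rwa [Real.rpow_one] at this

lemma mul_abs_le_trade {κ θ x : ℝ} (hκ : 0 < κ) (hθ : 0 < θ) (hx : κ ≤ |x|) :
    κ * |x| ≤ κ ^ (-θ) * |x| ^ (2 + θ) := by
  rw [Real.rpow_neg hκ.le, le_inv_mul_iff₀ (Real.rpow_pos_of_pos hκ _)]
  have := trade' (θ := θ) (s := 1 + θ) (t := 1) hκ (by linarith) (by ring) hx
  rw [Real.rpow_one] at this
  calc κ ^ θ * (κ * |x|) = κ ^ θ * κ ^ (1:ℝ) * |x| := by rw [Real.rpow_one]; ring
    _ = κ ^ (1 + θ) * |x| := by rw [← Real.rpow_add hκ]; ring_nf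
    _ ≤ _ := this

lemma sq_abs_le_trade {κ θ x : ℝ} (hκ : 0 < κ) (hθ : 0 < θ) (hx : κ ≤ |x|) :
    |x| * |x| ≤ κ ^ (-θ) * |x| ^ (2 + θ) := by
  rw [Real.rpow_neg hκ.le, le_inv_mul_iff₀ (Real.rpow_pos_of_pos hκ _)]
  have := trade' (θ := θ) (s := θ) (t := 2) hκ hθ.le (by ring) hx
  calc κ ^ θ * (|x| * |x|) = κ ^ θ * |x| ^ (2:ℝ) := by
        rw [show ((2:ℝ)) = ((2:ℕ):ℝ) by norm_num, Real.rpow_natCast]; ring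
    _ ≤ _ := this

lemma abs_tk_sub_bound {κ θ x : ℝ} (hκ : 0 < κ) (hθ : 0 < θ) :
    |tk κ x - x| ≤ κ ^ (-(1 + θ)) * |x| ^ (2 + θ) := by
  rcases le_or_gt |x| κ with h | h
  · rw [tk_eq_self h]
    simp only [sub_self, abs_zero]
    positivity
  · exact (abs_tk_sub_le hκ.le x).trans (abs_le_trade hκ hθ h.le)

lemma prod_pointwise {κ θ x w : ℝ} (hκ : 0 < κ) (hθ : 0 < θ) :
    |tk κ x * tk κ w - x * w| ≤ κ ^ (-θ) * (|x| ^ (2 + θ) + |w| ^ (2 + θ)) := by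
  have hB : 0 ≤ κ ^ (-θ) := (Real.rpow_pos_of_pos hκ _).le
  have hax : 0 ≤ |x| ^ (2 + θ) := Real.rpow_nonneg (abs_nonneg _) _
  have haw : 0 ≤ |w| ^ (2 + θ) := Real.rpow_nonneg (abs_nonneg _) _
  rcases le_or_gt |x| κ with hx | hx <;> rcases le_or_gt |w| κ with hw | hw
  · rw [tk_eq_self hx, tk_eq_self hw]
    simp
    positivity
  · rw [tk_eq_self hx]
    have h1 : |x * tk κ w - x * w| = |x| * |tk κ w - w| := by
      rw [show x * tk κ w - x * w = x * (tk κ w - w) by ring, abs_mul]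
    rw [h1]
    have h2 : |x| * |tk κ w - w| ≤ κ * |w| :=
      mul_le_mul hx (abs_tk_sub_le hκ.le w) (abs_nonneg _) hκ.le
    have h3 := mul_abs_le_trade hκ hθ hw.le
    nlinarith [mul_nonneg hB hax]
  · rw [tk_eq_self hw]
    have h1 : |tk κ x * w - x * w| = |w| * |tk κ x - x| := by
      rw [show tk κ x * w - x * w = w * (tk κ x - x) by ring, abs_mul]
    rw [h1]
    have h2 : |w| * |tk κ x - x| ≤ κ * |x| :=
      mul_le_mul hw (abs_tk_sub_le hκ.le x) (abs_nonneg _) hκ.le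
    have h3 := mul_abs_le_trade hκ hθ hx.le
    nlinarith [mul_nonneg hB haw]
  · have h1 : |tk κ x * tk κ w - x * w| ≤ κ * κ + |x| * |w| := by
      calc |tk κ x * tk κ w - x * w| ≤ |tk κ x * tk κ w| + |x * w| := abs_sub _ _
        _ ≤ κ * κ + |x| * |w| := by
            rw [abs_mul, abs_mul]
            exact add_le_add (mul_le_mul (abs_tk_le hκ.le x) (abs_tk_le hκ.le w)
              (abs_nonneg _) hκ.le) (le_refl _)
    have h2 := sq_abs_le_trade hκ hθ hx.le
    have h3 := sq_abs_le_trade hκ hθ hw.le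
    nlinarith [sq_nonneg (|x| - |w|), mul_le_mul hx.le hw.le hκ.le (abs_nonneg x)]

/-- For centered real random variables `X, W` with `E|X|^(2+θ) ≤ M` and
`E|W|^(2+θ) ≤ M` (`0 < θ ≤ 1`, `M > 0`) and any `κ > 0`,
`|Cov(t_κ(X), t_κ(W)) - Cov(X, W)| ≤ 2 κ^(-θ) M + κ^(-2(1+θ)) M²`. -/
theorem truncated_covariance_comparison {Ω : Type*} [MeasurableSpace Ω]
    (P : Measure Ω) [IsProbabilityMeasure P]
    (X W : Ω → ℝ) (hX : Measurable X) (hW : Measurable W)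
    (θ M : ℝ) (hθ0 : 0 < θ) (hθ1 : θ ≤ 1) (hM : 0 < M)
    (hmeanX : ∫ ω, X ω ∂P = 0) (hmeanW : ∫ ω, W ω ∂P = 0)
    (hintX : Integrable (fun ω => |X ω| ^ (2 + θ)) P)
    (hintW : Integrable (fun ω => |W ω| ^ (2 + θ)) P)
    (hintXW : Integrable (fun ω => X ω * W ω) P)
    (hmomX : ∫ ω, |X ω| ^ (2 + θ) ∂P ≤ M)
    (hmomW : ∫ ω, |W ω| ^ (2 + θ) ∂P ≤ M)
    (κ : ℝ) (hκ : 0 < κ) :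
    |cov P (fun ω => tk κ (X ω)) (fun ω => tk κ (W ω)) - cov P X W|
      ≤ 2 * κ ^ (-θ) * M + κ ^ (-(2 * (1 + θ))) * M ^ 2 := by
  have hA : 0 ≤ κ ^ (-(1 + θ)) := (Real.rpow_pos_of_pos hκ _).le
  have hB : 0 ≤ κ ^ (-θ) := (Real.rpow_pos_of_pos hκ _).le
  have hmtkX : Measurable fun ω => tk κ (X ω) := by
    unfold tk; exact (hX.min measurable_const).max measurable_const
  have hmtkW : Measurable fun ω => tk κ (W ω) := by
    unfold tk; exact (hW.min measurable_const).max measurable_const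
  have hitkX : Integrable (fun ω => tk κ (X ω)) P :=
    Integrable.mono' (integrable_const κ) hmtkX.aestronglyMeasurable
      (Filter.Eventually.of_forall fun ω => by
        rw [Real.norm_eq_abs]; exact abs_tk_le hκ.le _)
  have hitkW : Integrable (fun ω => tk κ (W ω)) P :=
    Integrable.mono' (integrable_const κ) hmtkW.aestronglyMeasurable
      (Filter.Eventually.of_forall fun ω => by
        rw [Real.norm_eq_abs]; exact abs_tk_le hκ.le _)
  have hitkXW : Integrable (fun ω => tk κ (X ω) * tk κ (W ω)) P :=
    Integrable.mono' (integrable_const (κ * κ)) (hmtkX.mul hmtkW).aestronglyMeasurable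
      (Filter.Eventually.of_forall fun ω => by
        rw [Real.norm_eq_abs, abs_mul]
        exact mul_le_mul (abs_tk_le hκ.le _) (abs_tk_le hκ.le _) (abs_nonneg _) hκ.le)
  have hsubX : Integrable (fun ω => X ω - tk κ (X ω)) P :=
    Integrable.mono' (hintX.const_mul (κ ^ (-(1 + θ)))) (hX.sub hmtkX).aestronglyMeasurable
      (Filter.Eventually.of_forall fun ω => by
        rw [Real.norm_eq_abs, abs_sub_comm]
        exact abs_tk_sub_bound hκ hθ0)
  have hsubW : Integrable (fun ω => W ω - tk κ (W ω)) P :=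
    Integrable.mono' (hintW.const_mul (κ ^ (-(1 + θ)))) (hW.sub hmtkW).aestronglyMeasurable
      (Filter.Eventually.of_forall fun ω => by
        rw [Real.norm_eq_abs, abs_sub_comm]
        exact abs_tk_sub_bound hκ hθ0)
  have hiX : Integrable X P := by
    have h := hsubX.add hitkX
    rw [show X = (fun ω => X ω - tk κ (X ω)) + fun ω => tk κ (X ω) by funext ω; simp]
    exact h
  have hiW : Integrable W P := by
    have h := hsubW.add hitkW
    rw [show W = (fun ω => W ω - tk κ (W ω)) + fun ω => tk κ (W ω) by funext ω; simp]
    exact h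
  -- bound on |E tk X|
  have hEtkX : |∫ ω, tk κ (X ω) ∂P| ≤ κ ^ (-(1 + θ)) * M := by
    calc |∫ ω, tk κ (X ω) ∂P| = |∫ ω, (tk κ (X ω) - X ω) ∂P| := by
          rw [integral_sub hitkX hiX, hmeanX, sub_zero]
      _ ≤ ∫ ω, |tk κ (X ω) - X ω| ∂P := by
          simpa [Real.norm_eq_abs] using
            norm_integral_le_integral_norm (fun ω => tk κ (X ω) - X ω) (μ := P)
      _ ≤ ∫ ω, κ ^ (-(1 + θ)) * |X ω| ^ (2 + θ) ∂P := by
          refine integral_mono ((hitkX.sub hiX).abs) (hintX.const_mul _) fun ω => ?_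
          exact abs_tk_sub_bound hκ hθ0
      _ = κ ^ (-(1 + θ)) * ∫ ω, |X ω| ^ (2 + θ) ∂P := integral_const_mul _ _
      _ ≤ κ ^ (-(1 + θ)) * M := mul_le_mul_of_nonneg_left hmomX hA
  have hEtkW : |∫ ω, tk κ (W ω) ∂P| ≤ κ ^ (-(1 + θ)) * M := by
    calc |∫ ω, tk κ (W ω) ∂P| = |∫ ω, (tk κ (W ω) - W ω) ∂P| := by
          rw [integral_sub hitkW hiW, hmeanW, sub_zero]
      _ ≤ ∫ ω, |tk κ (W ω) - W ω| ∂P := by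
          simpa [Real.norm_eq_abs] using
            norm_integral_le_integral_norm (fun ω => tk κ (W ω) - W ω) (μ := P)
      _ ≤ ∫ ω, κ ^ (-(1 + θ)) * |W ω| ^ (2 + θ) ∂P := by
          refine integral_mono ((hitkW.sub hiW).abs) (hintW.const_mul _) fun ω => ?_
          exact abs_tk_sub_bound hκ hθ0
      _ = κ ^ (-(1 + θ)) * ∫ ω, |W ω| ^ (2 + θ) ∂P := integral_const_mul _ _
      _ ≤ κ ^ (-(1 + θ)) * M := mul_le_mul_of_nonneg_left hmomW hA
  -- main term bound
  have hmain : |(∫ ω, tk κ (X ω) * tk κ (W ω) ∂P) - ∫ ω, X ω * W ω ∂P|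
      ≤ 2 * κ ^ (-θ) * M := by
    calc |(∫ ω, tk κ (X ω) * tk κ (W ω) ∂P) - ∫ ω, X ω * W ω ∂P|
        = |∫ ω, (tk κ (X ω) * tk κ (W ω) - X ω * W ω) ∂P| := by
          rw [integral_sub hitkXW hintXW]
      _ ≤ ∫ ω, |tk κ (X ω) * tk κ (W ω) - X ω * W ω| ∂P := by
          simpa [Real.norm_eq_abs] using
            norm_integral_le_integral_norm
              (fun ω => tk κ (X ω) * tk κ (W ω) - X ω * W ω) (μ := P)
      _ ≤ ∫ ω, κ ^ (-θ) * (|X ω| ^ (2 + θ) + |W ω| ^ (2 + θ)) ∂P := by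
          refine integral_mono ((hitkXW.sub hintXW).abs)
            ((hintX.add hintW).const_mul _) fun ω => ?_
          exact prod_pointwise hκ hθ0
      _ = κ ^ (-θ) * ((∫ ω, |X ω| ^ (2 + θ) ∂P) + ∫ ω, |W ω| ^ (2 + θ) ∂P) := by
          rw [integral_const_mul, integral_add hintX hintW]
      _ ≤ κ ^ (-θ) * (M + M) := by
          exact mul_le_mul_of_nonneg_left (add_le_add hmomX hmomW) hB
      _ = 2 * κ ^ (-θ) * M := by ring
  -- product term bound
  have hAA : κ ^ (-(1 + θ)) * κ ^ (-(1 + θ)) = κ ^ (-(2 * (1 + θ))) := by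
    rw [← Real.rpow_add hκ]; ring_nf
  have hprod : |(∫ ω, tk κ (X ω) ∂P) * ∫ ω, tk κ (W ω) ∂P|
      ≤ κ ^ (-(2 * (1 + θ))) * M ^ 2 := by
    calc |(∫ ω, tk κ (X ω) ∂P) * ∫ ω, tk κ (W ω) ∂P|
        = |∫ ω, tk κ (X ω) ∂P| * |∫ ω, tk κ (W ω) ∂P| := abs_mul _ _
      _ ≤ (κ ^ (-(1 + θ)) * M) * (κ ^ (-(1 + θ)) * M) :=
          mul_le_mul hEtkX hEtkW (abs_nonneg _) (by positivity)
      _ = κ ^ (-(2 * (1 + θ))) * M ^ 2 := by rw [← hAA]; ring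
  have hcd : cov P (fun ω => tk κ (X ω)) (fun ω => tk κ (W ω)) - cov P X W
      = ((∫ ω, tk κ (X ω) * tk κ (W ω) ∂P) - ∫ ω, X ω * W ω ∂P)
        - (∫ ω, tk κ (X ω) ∂P) * ∫ ω, tk κ (W ω) ∂P := by
    unfold cov
    rw [hmeanX]
    ring
  rw [hcd]
  calc |_ - _| ≤ |(∫ ω, tk κ (X ω) * tk κ (W ω) ∂P) - ∫ ω, X ω * W ω ∂P|
        + |(∫ ω, tk κ (X ω) ∂P) * ∫ ω, tk κ (W ω) ∂P| := abs_sub _ _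
    _ ≤ 2 * κ ^ (-θ) * M + κ ^ (-(2 * (1 + θ))) * M ^ 2 := add_le_add hmain hprod
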